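/- arXiv:1304.2961 — 2 statements merged into one kernel-verified Lean document; each statement's English description precedes it below -/
import Mathlib

section
/- For all m, n, r ∈ ℕ+, the number c(m,n,r) of cyclic subgroups of the group ℤ_m × ℤ_n × ℤ_r is given by c(m,n,r) = Σ_{a ∣ m} Σ_{b ∣ n} Σ_{c ∣ r} φ(a)·φ(b)·φ(c)/φ(lcm(a,b,c)). -/
open Finset AddSubgroup

section Aux

variable {G : Type*} [AddGroup G]

lemma addOrderOf_zsmul_dvd' (k : ℤ) (x : G) : addOrderOf (k • x) ∣ addOrderOf x := by
  apply addOrderOf_dvd_of_nsmul_eq_zero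
  have h : ((addOrderOf x : ℤ)) • x = 0 := by
    rw [natCast_zsmul]; exact addOrderOf_nsmul_eq_zero x
  rw [← natCast_zsmul, ← mul_zsmul, mul_comm, mul_zsmul, h, smul_zero]

lemma isAddCyclic_zmultiples' (x : G) : IsAddCyclic (zmultiples x) := by
  constructor
  refine ⟨⟨x, mem_zmultiples x⟩, fun y => ?_⟩
  obtain ⟨k, hk⟩ := mem_zmultiples_iff.mp y.2
  exact ⟨k, Subtype.ext (by simpa using hk)⟩

lemma hom_addOrderOf_eq' {H : Type*} [AddGroup H] {x y : G}
    (h : closure ({x} : Set G) = closure ({y} : Set G)) (φ : G →+ H) :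
    addOrderOf (φ x) = addOrderOf (φ y) := by
  obtain ⟨k, hk⟩ := mem_closure_singleton.mp (h ▸ mem_closure_singleton_self y)
  obtain ⟨l, hl⟩ := mem_closure_singleton.mp (h.symm ▸ mem_closure_singleton_self x)
  refine Nat.dvd_antisymm ?_ ?_
  · rw [← hl, map_zsmul]; exact addOrderOf_zsmul_dvd' l (φ y)
  · rw [← hk, map_zsmul]; exact addOrderOf_zsmul_dvd' k (φ x)

end Aux

section Count

variable {G : Type*} [AddCommGroup G] [Fintype G] [DecidableEq (AddSubgroup G)]

lemma card_closure_singleton_eq' (x : G) :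
    #{y : G | closure ({y} : Set G) = closure ({x} : Set G)} = (addOrderOf x).totient := by
  classical
  set V := zmultiples x with hV
  have key : ∀ y : G, closure ({y} : Set G) = closure ({x} : Set G) ↔
      (y ∈ V ∧ addOrderOf y = addOrderOf x) := by
    intro y
    rw [← zmultiples_eq_closure, ← zmultiples_eq_closure]
    constructor
    · intro h
      refine ⟨by rw [hV, ← h]; exact mem_zmultiples y, ?_⟩
      rw [← Nat.card_zmultiples y, h, Nat.card_zmultiples]
    · rintro ⟨h1, h2⟩
      refine eq_of_le_of_card_ge (zmultiples_le_of_mem h1) ?_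
      rw [Nat.card_zmultiples, Nat.card_zmultiples, h2]
  have hcyc : IsAddCyclic V := isAddCyclic_zmultiples' x
  have hcard : Fintype.card V = addOrderOf x := by
    rw [← Nat.card_eq_fintype_card, hV, Nat.card_zmultiples]
  have hcount := IsAddCyclic.card_addOrderOf_eq_totient (α := V)
    (d := addOrderOf x) (hcard ▸ dvd_rfl)
  calc #{y : G | closure ({y} : Set G) = closure ({x} : Set G)}
      = #{y : G | y ∈ V ∧ addOrderOf y = addOrderOf x} := by
        congr 1
        exact Finset.filter_congr (fun y _ => key y)
    _ = #{z : V | addOrderOf z = addOrderOf x} := by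
        rw [← Fintype.card_subtype, ← Fintype.card_subtype]
        exact Fintype.card_congr ((Equiv.subtypeSubtypeEquivSubtypeInter _ _).symm.trans
          (Equiv.subtypeEquivRight fun z => by rw [AddSubgroup.addOrderOf_coe]))
    _ = (addOrderOf x).totient := hcount

end Count

section ZModCount

lemma card_addOrderOf_zmod {k : ℕ} [NeZero k] (a : ℕ) (ha : a ∣ k) :
    #{y : ZMod k | addOrderOf y = a} = a.totient :=
  IsAddCyclic.card_addOrderOf_eq_totient (by rwa [ZMod.card])

end ZModCount

section Ord3

variable {A B C : Type*} [AddGroup A] [AddGroup B] [AddGroup C]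

/-- The triple of component orders. -/
noncomputable def ord3 (x : A × B × C) : ℕ × ℕ × ℕ :=
  (addOrderOf x.1, addOrderOf x.2.1, addOrderOf x.2.2)

lemma ord3_eq_of_closure_eq {x y : A × B × C}
    (h : closure ({x} : Set (A × B × C)) = closure ({y} : Set (A × B × C))) :
    ord3 x = ord3 y := by
  refine Prod.ext ?_ (Prod.ext ?_ ?_)
  · exact hom_addOrderOf_eq' h (AddMonoidHom.fst _ _)
  · exact hom_addOrderOf_eq' h ((AddMonoidHom.fst _ _).comp (AddMonoidHom.snd _ _))
  · exact hom_addOrderOf_eq' h ((AddMonoidHom.snd _ _).comp (AddMonoidHom.snd _ _))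

open Classical in
/-- The component orders of any generator of a cyclic subgroup. -/
noncomputable def subOrd (V : AddSubgroup (A × B × C)) : ℕ × ℕ × ℕ :=
  if h : ∃ x, V = AddSubgroup.closure {x} then ord3 h.choose else 1

lemma subOrd_eq {V : AddSubgroup (A × B × C)} {x : A × B × C}
    (hx : V = AddSubgroup.closure {x}) : subOrd V = ord3 x := by
  rw [subOrd, dif_pos (⟨x, hx⟩ : ∃ y, V = AddSubgroup.closure {y})]
  exact ord3_eq_of_closure_eq ((Exists.choose_spec (⟨x, hx⟩ : ∃ y, V = AddSubgroup.closure {y})).symm.trans hx)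

end Ord3

/-- The number of cyclic subgroups of `ℤ_m × ℤ_n × ℤ_r` equals
`Σ_{a ∣ m} Σ_{b ∣ n} Σ_{c ∣ r} φ(a)φ(b)φ(c)/φ(lcm(a,b,c))`. -/
theorem card_cyclic_addSubgroups (m n r : ℕ) (hm : 0 < m) (hn : 0 < n) (hr : 0 < r) :
    Nat.card {V : AddSubgroup (ZMod m × ZMod n × ZMod r) //
        ∃ x : ZMod m × ZMod n × ZMod r, V = AddSubgroup.closure {x}} =
      ∑ a ∈ m.divisors, ∑ b ∈ n.divisors, ∑ c ∈ r.divisors,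
        Nat.totient a * Nat.totient b * Nat.totient c /
          Nat.totient (Nat.lcm a (Nat.lcm b c)) := by
  classical
  haveI : NeZero m := ⟨hm.ne'⟩
  haveI : NeZero n := ⟨hn.ne'⟩
  haveI : NeZero r := ⟨hr.ne'⟩
  set S : Finset (AddSubgroup (ZMod m × ZMod n × ZMod r)) :=
    Finset.image (fun x : (ZMod m × ZMod n × ZMod r) => AddSubgroup.closure {x}) Finset.univ with hS
  set T : Finset (ℕ × ℕ × ℕ) := m.divisors ×ˢ n.divisors ×ˢ r.divisors with hT
  -- Step 1 : the `Nat.card` equals the cardinality of the finset `S`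
  have hset : {V : AddSubgroup (ZMod m × ZMod n × ZMod r) | ∃ x : (ZMod m × ZMod n × ZMod r), V = AddSubgroup.closure {x}} = ↑S := by
    ext V
    simp [hS, eq_comm]
  have h1 : Nat.card {V : AddSubgroup (ZMod m × ZMod n × ZMod r) // ∃ x : (ZMod m × ZMod n × ZMod r), V = AddSubgroup.closure {x}} = S.card := by
    calc Nat.card {V : AddSubgroup (ZMod m × ZMod n × ZMod r) // ∃ x : (ZMod m × ZMod n × ZMod r), V = AddSubgroup.closure {x}}
        = Nat.card {V : AddSubgroup (ZMod m × ZMod n × ZMod r) | ∃ x : (ZMod m × ZMod n × ZMod r), V = AddSubgroup.closure {x}} := rfl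
      _ = Nat.card (↑S : Set (AddSubgroup (ZMod m × ZMod n × ZMod r))) := by rw [hset]
      _ = S.card := by rw [Nat.card_coe_set_eq, Set.ncard_coe_finset]
  rw [h1]
  -- orders of components divide the moduli
  have hmemT : ∀ x : (ZMod m × ZMod n × ZMod r), ord3 x ∈ T := by
    intro x
    have d1 : addOrderOf x.1 ∣ m := by
      simpa [ZMod.card] using addOrderOf_dvd_card (x := x.1)
    have d2 : addOrderOf x.2.1 ∣ n := by
      simpa [ZMod.card] using addOrderOf_dvd_card (x := x.2.1)
    have d3 : addOrderOf x.2.2 ∣ r := by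
      simpa [ZMod.card] using addOrderOf_dvd_card (x := x.2.2)
    simp only [hT, Finset.mem_product, Nat.mem_divisors, ord3]
    exact ⟨⟨d1, hm.ne'⟩, ⟨d2, hn.ne'⟩, ⟨d3, hr.ne'⟩⟩
  have hST : ∀ V ∈ S, subOrd V ∈ T := by
    intro V hV
    obtain ⟨x, -, rfl⟩ := Finset.mem_image.mp hV
    rw [subOrd_eq rfl]
    exact hmemT x
  rw [Finset.card_eq_sum_card_fiberwise hST]
  -- rewrite the triple sum as a sum over `T`
  have hsum : ∑ a ∈ m.divisors, ∑ b ∈ n.divisors, ∑ c ∈ r.divisors,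
      a.totient * b.totient * c.totient / (Nat.lcm a (Nat.lcm b c)).totient
      = ∑ t ∈ T, t.1.totient * t.2.1.totient * t.2.2.totient /
          (Nat.lcm t.1 (Nat.lcm t.2.1 t.2.2)).totient := by
    rw [hT, Finset.sum_product]
    exact Finset.sum_congr rfl fun a _ => by rw [Finset.sum_product]
  rw [hsum]
  apply Finset.sum_congr rfl
  intro t ht
  obtain ⟨ht1, ht2, ht3⟩ : t.1 ∈ m.divisors ∧ t.2.1 ∈ n.divisors ∧ t.2.2 ∈ r.divisors := by
    simpa [hT, Finset.mem_product] using ht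
  have hp1 : 0 < t.1 := Nat.pos_of_mem_divisors ht1
  have hp2 : 0 < t.2.1 := Nat.pos_of_mem_divisors ht2
  have hp3 : 0 < t.2.2 := Nat.pos_of_mem_divisors ht3
  have hLpos : 0 < (Nat.lcm t.1 (Nat.lcm t.2.1 t.2.2)).totient :=
    Nat.totient_pos.mpr (Nat.lcm_pos hp1 (Nat.lcm_pos hp2 hp3))
  -- the number of elements with given component orders
  have hE : (Finset.univ.filter fun x : (ZMod m × ZMod n × ZMod r) => ord3 x = t).card
      = t.1.totient * t.2.1.totient * t.2.2.totient := by
    have hsplit : (Finset.univ.filter fun x : (ZMod m × ZMod n × ZMod r) => ord3 x = t)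
        = (Finset.univ.filter fun a : ZMod m => addOrderOf a = t.1) ×ˢ
          ((Finset.univ.filter fun b : ZMod n => addOrderOf b = t.2.1) ×ˢ
           (Finset.univ.filter fun c : ZMod r => addOrderOf c = t.2.2)) := by
      ext x
      simp [ord3, Finset.mem_product, Prod.ext_iff, and_assoc]
    rw [hsplit, Finset.card_product, Finset.card_product]
    have e1 := card_addOrderOf_zmod (k := m) t.1 (Nat.mem_divisors.mp ht1).1
    have e2 := card_addOrderOf_zmod (k := n) t.2.1 (Nat.mem_divisors.mp ht2).1
    have e3 := card_addOrderOf_zmod (k := r) t.2.2 (Nat.mem_divisors.mp ht3).1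
    rw [e1, e2, e3, mul_assoc]
  -- fibering the elements over the cyclic subgroups they generate
  have hmap : ∀ x ∈ (Finset.univ.filter fun x : (ZMod m × ZMod n × ZMod r) => ord3 x = t),
      AddSubgroup.closure {x} ∈ S.filter fun V => subOrd V = t := by
    intro x hx
    rw [Finset.mem_filter] at hx ⊢
    exact ⟨Finset.mem_image_of_mem _ (Finset.mem_univ x), by rw [subOrd_eq rfl]; exact hx.2⟩
  have hterm : ∀ V ∈ S.filter (fun V => subOrd V = t),
      ((Finset.univ.filter fun x : (ZMod m × ZMod n × ZMod r) => ord3 x = t).filter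
        fun x => AddSubgroup.closure {x} = V).card
      = (Nat.lcm t.1 (Nat.lcm t.2.1 t.2.2)).totient := by
    intro V hV
    obtain ⟨hVS, hVt⟩ := Finset.mem_filter.mp hV
    obtain ⟨x₀, -, rfl⟩ := Finset.mem_image.mp hVS
    have hx₀ : ord3 x₀ = t := by rw [← subOrd_eq rfl]; exact hVt
    have hfe : ((Finset.univ.filter fun x : (ZMod m × ZMod n × ZMod r) => ord3 x = t).filter
          fun x => AddSubgroup.closure {x} = AddSubgroup.closure {x₀})
        = Finset.univ.filter
            (fun y : (ZMod m × ZMod n × ZMod r) => AddSubgroup.closure {y} = AddSubgroup.closure ({x₀} : Set (ZMod m × ZMod n × ZMod r))) := by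
      ext y
      simp only [Finset.mem_filter, Finset.mem_univ, true_and, and_iff_right_iff_imp]
      intro h
      rw [ord3_eq_of_closure_eq h, hx₀]
    have hord : addOrderOf x₀ = Nat.lcm t.1 (Nat.lcm t.2.1 t.2.2) := by
      rw [Prod.addOrderOf, Prod.addOrderOf,
        show addOrderOf x₀.1 = t.1 from by rw [← hx₀]; rfl,
        show addOrderOf x₀.2.1 = t.2.1 from by rw [← hx₀]; rfl,
        show addOrderOf x₀.2.2 = t.2.2 from by rw [← hx₀]; rfl]
    rw [hfe, ← hord]
    exact card_closure_singleton_eq' x₀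
  have hfib : (Finset.univ.filter fun x : (ZMod m × ZMod n × ZMod r) => ord3 x = t).card
      = (S.filter fun V => subOrd V = t).card *
        (Nat.lcm t.1 (Nat.lcm t.2.1 t.2.2)).totient := by
    rw [Finset.card_eq_sum_card_fiberwise hmap, Finset.sum_congr rfl hterm,
      Finset.sum_const, smul_eq_mul]
  exact (Nat.div_eq_of_eq_mul_left hLpos (hE.symm.trans hfib)).symm
end

section
/- Let m, n ∈ ℕ+ and let a ∣ m, b ∣ n, 0 ≤ s ≤ a−1 with a ∣ (n/b)·s, and let V_{a,b,s} be the subgroup of ℤ_m × ℤ_n generated by (a,0) and (s,b). Then the set S_{a,b} = {0,1,…,a−1} × {0,1,…,b−1} is a complete system of representatives of the cosets of V_{a,b,s} in ℤ_m × ℤ_n; that is, the elements of S_{a,b} are pairwise incongruent modulo V_{a,b,s}, and for every (x,y) ∈ ℤ_m × ℤ_n there is a (unique) (x',y') ∈ S_{a,b} with (x,y) − (x',y') ∈ V_{a,b,s}. -/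
private lemma natcast_zmod_inj {c u v : ℕ} (hu : u < c) (hv : v < c)
    (h : (u : ZMod c) = (v : ZMod c)) : u = v := by
  have hc : 0 < c := lt_of_le_of_lt (Nat.zero_le u) hu
  haveI : NeZero c := ⟨hc.ne'⟩
  calc u = (u : ZMod c).val := (ZMod.val_cast_of_lt hu).symm
    _ = (v : ZMod c).val := by rw [h]
    _ = v := ZMod.val_cast_of_lt hv

/-- For `a ∣ m`, `b ∣ n`, `0 ≤ s ≤ a-1` with `a ∣ (n/b)·s` and `V_{a,b,s}` the subgroup of
`ℤ_m × ℤ_n` generated by `(a,0)` and `(s,b)`, the set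
`S_{a,b} = {0,…,a-1} × {0,…,b-1}` is a complete system of representatives of the cosets of
`V_{a,b,s}`: its elements are pairwise incongruent modulo `V_{a,b,s}`, and every element of
`ℤ_m × ℤ_n` is congruent to a (unique) element of `S_{a,b}` modulo `V_{a,b,s}`. -/
theorem transversal_Vabs (m n : ℕ) (hm : 0 < m) (hn : 0 < n) (a b s : ℕ)
    (ha : a ∣ m) (hb : b ∣ n) (hs : s ≤ a - 1) (hdvd : a ∣ (n / b) * s) :
    (∀ x' y' x'' y'' : ℕ, x' < a → y' < b → x'' < a → y'' < b →
      ((x' : ZMod m), (y' : ZMod n)) - ((x'' : ZMod m), (y'' : ZMod n)) ∈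
        (AddSubgroup.closure {((a : ZMod m), (0 : ZMod n)), ((s : ZMod m), (b : ZMod n))} :
          AddSubgroup (ZMod m × ZMod n)) →
      x' = x'' ∧ y' = y'') ∧
    (∀ p : ZMod m × ZMod n, ∃! q : ℕ × ℕ, q.1 < a ∧ q.2 < b ∧
      p - ((q.1 : ZMod m), (q.2 : ZMod n)) ∈
        (AddSubgroup.closure {((a : ZMod m), (0 : ZMod n)), ((s : ZMod m), (b : ZMod n))} :
          AddSubgroup (ZMod m × ZMod n))) := by
  have ha0 : 0 < a := Nat.pos_of_dvd_of_pos ha hm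
  have hb0 : 0 < b := Nat.pos_of_dvd_of_pos hb hn
  haveI : NeZero m := ⟨hm.ne'⟩
  haveI : NeZero n := ⟨hn.ne'⟩
  set V : AddSubgroup (ZMod m × ZMod n) :=
    AddSubgroup.closure {((a : ZMod m), (0 : ZMod n)), ((s : ZMod m), (b : ZMod n))} with hV
  have key : ∀ x' y' x'' y'' : ℕ, x' < a → y' < b → x'' < a → y'' < b →
      ((x' : ZMod m), (y' : ZMod n)) - ((x'' : ZMod m), (y'' : ZMod n)) ∈ V →
      x' = x'' ∧ y' = y'' := by
    intro x' y' x'' y'' hx' hy' hx'' hy'' hmem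
    rw [hV, AddSubgroup.mem_closure_pair] at hmem
    obtain ⟨i, j, hij⟩ := hmem
    rw [Prod.ext_iff] at hij
    obtain ⟨h1, h2⟩ := hij
    simp only [Prod.fst_add, Prod.snd_add, Prod.fst_mul, Prod.snd_mul, Prod.fst_intCast,
      Prod.snd_intCast, Prod.fst_sub, Prod.snd_sub, Prod.smul_fst, Prod.smul_snd,
      smul_zero, mul_zero, zero_add, add_zero, zsmul_eq_mul] at h1 h2
    -- h1 : ↑i * ↑a + ↑j * ↑s = ↑x' - ↑x''  in ZMod m
    -- h2 : ↑j * ↑b = ↑y' - ↑y''            in ZMod n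
    have h2' := congrArg (ZMod.castHom hb (ZMod b)) h2
    simp only [map_sub, map_mul, map_intCast, map_natCast, ZMod.natCast_self, mul_zero] at h2'
    have hyeq : y' = y'' := natcast_zmod_inj hy' hy'' (sub_eq_zero.mp h2'.symm)
    subst hyeq
    rw [sub_self] at h2
    have h2'' : ((j * (b : ℤ) : ℤ) : ZMod n) = 0 := by push_cast; rw [h2]
    have hnd : (n : ℤ) ∣ j * (b : ℤ) := (ZMod.intCast_zmod_eq_zero_iff_dvd _ _).mp h2''
    obtain ⟨k, hk⟩ := hnd
    have hnb : (n : ℤ) = ((n / b : ℕ) : ℤ) * (b : ℤ) := by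
      exact_mod_cast (Nat.div_mul_cancel hb).symm
    have hj : j = ((n / b : ℕ) : ℤ) * k := by
      have hb' : (b : ℤ) ≠ 0 := by exact_mod_cast hb0.ne'
      have hjb : j * (b : ℤ) = (((n / b : ℕ) : ℤ) * k) * (b : ℤ) := by rw [hk, hnb]; ring
      exact mul_right_cancel₀ hb' hjb
    have hjs : (a : ℤ) ∣ j * (s : ℤ) := by
      have h1d : (a : ℤ) ∣ ((n / b : ℕ) : ℤ) * (s : ℤ) := by exact_mod_cast hdvd
      rw [hj]
      exact h1d.trans ⟨k, by ring⟩
    have h1' := congrArg (ZMod.castHom ha (ZMod a)) h1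
    simp only [map_sub, map_add, map_mul, map_intCast, map_natCast, ZMod.natCast_self,
      mul_zero, zero_add] at h1'
    have hjs0 : ((j : ZMod a)) * ((s : ℕ) : ZMod a) = 0 := by
      have hz : ((j * (s : ℤ) : ℤ) : ZMod a) = 0 :=
        (ZMod.intCast_zmod_eq_zero_iff_dvd _ _).mpr hjs
      push_cast at hz
      exact hz
    rw [hjs0] at h1'
    exact ⟨natcast_zmod_inj hx' hx'' (sub_eq_zero.mp h1'.symm), rfl⟩
  refine ⟨key, ?_⟩
  intro p
  set x : ℕ := p.1.val with hx
  set y : ℕ := p.2.val with hy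
  set jn : ℕ := y / b with hjn
  set t : ℤ := (x : ℤ) - (jn : ℤ) * (s : ℤ) with ht
  have ha' : (0 : ℤ) < (a : ℤ) := by exact_mod_cast ha0
  have hmod0 : 0 ≤ t % (a : ℤ) := Int.emod_nonneg t ha'.ne'
  have hmodlt : t % (a : ℤ) < (a : ℤ) := Int.emod_lt_of_pos t ha'
  set q1 : ℕ := (t % (a : ℤ)).toNat with hq1
  set q2 : ℕ := y % b with hq2
  have hq1lt : q1 < a := by omega
  have hq2lt : q2 < b := Nat.mod_lt _ hb0
  have hp1 : ((x : ℕ) : ZMod m) = p.1 := by simp [hx, ZMod.natCast_val, ZMod.cast_id]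
  have hp2 : ((y : ℕ) : ZMod n) = p.2 := by simp [hy, ZMod.natCast_val, ZMod.cast_id]
  have hq1' : ((q1 : ℕ) : ℤ) = t % (a : ℤ) := by rw [hq1]; exact Int.toNat_of_nonneg hmod0
  have hq : p - ((q1 : ZMod m), (q2 : ZMod n)) ∈ V := by
    rw [hV, AddSubgroup.mem_closure_pair]
    refine ⟨t / (a : ℤ), (jn : ℤ), ?_⟩
    rw [Prod.ext_iff]
    constructor
    · simp only [Prod.fst_add, Prod.fst_mul, Prod.fst_intCast, Prod.fst_sub, zsmul_eq_mul]
      have hde := Int.mul_ediv_add_emod t (a : ℤ)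
      have hfZ : (t / (a : ℤ)) * (a : ℤ) + (jn : ℤ) * (s : ℤ) = (x : ℤ) - ((q1 : ℕ) : ℤ) := by
        rw [hq1']
        linear_combination hde + ht
      have hc := congrArg (fun z : ℤ => (z : ZMod m)) hfZ
      push_cast at hc
      rw [hp1] at hc
      exact_mod_cast hc
    · simp only [Prod.snd_add, Prod.snd_mul, Prod.snd_intCast, Prod.snd_sub, zsmul_eq_mul,
        mul_zero, zero_add]
      have hdm : b * jn + q2 = y := Nat.div_add_mod y b
      have hc := congrArg (fun z : ℕ => (z : ZMod n)) hdm
      push_cast at hc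
      rw [hp2.symm]
      push_cast
      linear_combination hc
  refine ⟨(q1, q2), ⟨hq1lt, hq2lt, hq⟩, ?_⟩
  rintro ⟨u, v⟩ ⟨hu, hv, hmem'⟩
  have hmem2 : ((u : ZMod m), (v : ZMod n)) - ((q1 : ZMod m), (q2 : ZMod n)) ∈ V := by
    have hsub := V.sub_mem hq hmem'
    rwa [sub_sub_sub_cancel_left] at hsub
  obtain ⟨e1, e2⟩ := key u v q1 q2 hu hv hq1lt hq2lt hmem2
  exact Prod.ext e1 e2
end
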